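/- Let M be the additive submonoid of ℚ≥0 generated by {1/p : p prime}. Then M is atomic with atoms {1/p : p prime}, and 1 is the unique Betti element of M. In particular, M has finitely many Betti elements but is not finitely generated. -/

import Mathlib

open Multiset

def pinv : ℕ → ℚ := fun p => 1 / (p : ℚ)
def Gset : Set ℚ := {x : ℚ | ∃ p : ℕ, p.Prime ∧ x = 1 / (p:ℚ)}

lemma mem_Gset_iff {a : ℚ} : a ∈ Gset ↔ ∃ p : ℕ, p.Prime ∧ a = pinv p := Iff.rfl

lemma pinv_pos {p : ℕ} (hp : 0 < p) : 0 < pinv p := by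
  simp only [pinv, one_div, inv_pos]; exact_mod_cast hp

lemma Gset_pos {a : ℚ} (ha : a ∈ Gset) : 0 < a := by
  obtain ⟨p, hp, rfl⟩ := ha
  exact pinv_pos hp.pos

lemma M_nonneg {x : ℚ} (hx : x ∈ AddSubmonoid.closure Gset) : 0 ≤ x := by
  induction hx using AddSubmonoid.closure_induction with
  | mem a ha => exact (Gset_pos ha).le
  | zero => exact le_refl 0
  | add a b _ _ ha hb => linarith

lemma exists_rep (l : Multiset ℚ) (hl : ∀ a ∈ l, a ∈ Gset) :
    ∃ P : Multiset ℕ, (∀ p ∈ P, p.Prime) ∧ P.map pinv = l := by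
  induction l using Multiset.induction_on with
  | empty => exact ⟨0, by simp, by simp⟩
  | cons a s ih =>
    obtain ⟨P, hP, hmap⟩ := ih (fun b hb => hl b (mem_cons_of_mem hb))
    obtain ⟨p, hp, rfl⟩ := hl a (mem_cons_self a s)
    exact ⟨p ::ₘ P, by
      intro r hr
      rcases mem_cons.mp hr with h | h
      · exact h ▸ hp
      · exact hP r h, by rw [Multiset.map_cons, hmap]; rfl⟩

lemma mem_M_iff {x : ℚ} : x ∈ AddSubmonoid.closure Gset ↔
    ∃ P : Multiset ℕ, (∀ p ∈ P, p.Prime) ∧ (P.map pinv).sum = x := by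
  constructor
  · intro hx
    obtain ⟨l, hl, hsum⟩ := AddSubmonoid.exists_multiset_of_mem_closure hx
    obtain ⟨P, hP, hmap⟩ := exists_rep l hl
    exact ⟨P, hP, by rw [hmap, hsum]⟩
  · rintro ⟨P, hP, rfl⟩
    apply AddSubmonoid.multiset_sum_mem
    intro a ha
    obtain ⟨p, hp, rfl⟩ := Multiset.mem_map.mp ha
    exact AddSubmonoid.subset_closure ⟨p, hP p hp, rfl⟩


lemma pinv_def (p : ℕ) : pinv p = 1 / (p : ℚ) := rfl
lemma pinv_inj {p q : ℕ} (hp : 0 < p) (hq : 0 < q) (h : pinv p = pinv q) : p = q := by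
  simp only [pinv_def, one_div] at h
  have : (p : ℚ) = q := inv_injective h
  exact_mod_cast this

lemma msum_le {l t : Multiset ℚ} (h : l ≤ t) (ht : ∀ a ∈ t, 0 ≤ a) : l.sum ≤ t.sum := by
  obtain ⟨u, rfl⟩ := Multiset.le_iff_exists_add.mp h
  rw [Multiset.sum_add]
  have : 0 ≤ u.sum := Multiset.sum_nonneg fun a ha => ht a (Multiset.mem_add.mpr (Or.inr ha))
  linarith

lemma msum_pos {l : Multiset ℚ} (h : ∀ a ∈ l, 0 < a) (hne : l ≠ 0) : 0 < l.sum := by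
  obtain ⟨a, ha⟩ := Multiset.exists_mem_of_ne_zero hne
  obtain ⟨t, rfl⟩ := Multiset.exists_cons_of_mem ha
  rw [Multiset.sum_cons]
  have h0 : 0 ≤ t.sum := Multiset.sum_nonneg fun b hb => (h b (Multiset.mem_cons_of_mem hb)).le
  have := h a ha
  linarith

/-- The core congruence lemma. -/
lemma key_congr (P P' : Multiset ℕ) (hP : ∀ p ∈ P, p.Prime) (hP' : ∀ p ∈ P', p.Prime)
    (hsum : (P.map pinv).sum = (P'.map pinv).sum)
    (q : ℕ) (hq : q.Prime) : (q:ℤ) ∣ (P.count q : ℤ) - P'.count q := by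
  classical
  set S : Finset ℕ := (P + P').toFinset with hS
  have hSprime : ∀ p ∈ S, p.Prime := by
    intro p hp
    rcases Multiset.mem_add.mp (Multiset.mem_toFinset.mp hp) with h | h
    · exact hP p h
    · exact hP' p h
  set N : ℕ := ∏ p ∈ S, p with hN
  have hdvdN : ∀ p ∈ S, p ∣ N := fun p hp => Finset.dvd_prod_of_mem id hp
  have hNdiv : ∀ p ∈ S, N / p = ∏ r ∈ S.erase p, r := by
    intro p hp
    have h1 : N = p * ∏ r ∈ S.erase p, r := (Finset.mul_prod_erase S id hp).symm
    rw [h1, Nat.mul_div_cancel_left _ (hSprime p hp).pos]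
  have step : ∀ Q : Multiset ℕ, (∀ p ∈ Q, p ∈ S) →
      (Q.map pinv).sum * N = ∑ p ∈ S, (Q.count p : ℚ) * ((N / p : ℕ) : ℚ) := by
    intro Q hQ
    rw [Finset.sum_multiset_map_count]
    have hsub : Q.toFinset ⊆ S := fun p hp => hQ p (Multiset.mem_toFinset.mp hp)
    rw [← Finset.sum_subset hsub (by
      intro p _ hp
      have : Q.count p = 0 := Multiset.count_eq_zero.mpr (fun h => hp (Multiset.mem_toFinset.mpr h))
      simp [this])]
    rw [Finset.sum_mul]
    apply Finset.sum_congr rfl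
    intro p hp
    have hpS := hsub hp
    have hp0 : (p:ℚ) ≠ 0 := Nat.cast_ne_zero.mpr (hSprime p hpS).pos.ne'
    rw [Nat.cast_div (hdvdN p hpS) hp0, pinv_def]
    push_cast
    rw [nsmul_eq_mul]
    ring
  have hPmem : ∀ p ∈ P, p ∈ S := fun p hp =>
    Multiset.mem_toFinset.mpr (Multiset.mem_add.mpr (Or.inl hp))
  have hP'mem : ∀ p ∈ P', p ∈ S := fun p hp =>
    Multiset.mem_toFinset.mpr (Multiset.mem_add.mpr (Or.inr hp))
  have hQeq : (∑ p ∈ S, (P.count p : ℚ) * ((N / p : ℕ) : ℚ))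
      = ∑ p ∈ S, (P'.count p : ℚ) * ((N / p : ℕ) : ℚ) := by
    rw [← step P hPmem, ← step P' hP'mem, hsum]
  have hZeq : (∑ p ∈ S, (P.count p : ℤ) * ((N / p : ℕ) : ℤ))
      = ∑ p ∈ S, (P'.count p : ℤ) * ((N / p : ℕ) : ℤ) := by
    have : ((∑ p ∈ S, (P.count p : ℤ) * ((N / p : ℕ) : ℤ) : ℤ) : ℚ)
        = ((∑ p ∈ S, (P'.count p : ℤ) * ((N / p : ℕ) : ℤ) : ℤ) : ℚ) := by
      push_cast
      exact_mod_cast hQeq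
    exact_mod_cast this
  by_cases hqS : q ∈ S
  · have hsplit : (0:ℤ) = ∑ p ∈ S, ((P.count p : ℤ) - P'.count p) * ((N / p : ℕ) : ℤ) := by
      simp only [sub_mul, Finset.sum_sub_distrib, hZeq, sub_self]
    rw [← Finset.add_sum_erase S _ hqS] at hsplit
    have hrest : (q:ℤ) ∣ ∑ p ∈ S.erase q, ((P.count p : ℤ) - P'.count p) * ((N / p : ℕ) : ℤ) := by
      apply Finset.dvd_sum
      intro p hp
      have hpS : p ∈ S := Finset.mem_of_mem_erase hp
      have hqp : q ≠ p := fun h => (Finset.ne_of_mem_erase hp) h.symm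
      have : q ∣ N / p := by
        rw [hNdiv p hpS]
        exact Finset.dvd_prod_of_mem id (Finset.mem_erase.mpr ⟨hqp, hqS⟩)
      exact Dvd.dvd.mul_left (Int.natCast_dvd_natCast.mpr this) _
    have hterm : (q:ℤ) ∣ ((P.count q : ℤ) - P'.count q) * ((N / q : ℕ) : ℤ) := by
      have h0 : ((P.count q : ℤ) - P'.count q) * ((N / q : ℕ) : ℤ)
          = - ∑ p ∈ S.erase q, ((P.count p : ℤ) - P'.count p) * ((N / p : ℕ) : ℤ) := by
        linarith [hsplit]
      rw [h0]
      exact hrest.neg_right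
    have hqprime : Prime (q:ℤ) := Nat.prime_iff_prime_int.mp hq
    rcases hqprime.dvd_mul.mp hterm with h | h
    · exact h
    · exfalso
      have hnat : q ∣ N / q := Int.natCast_dvd_natCast.mp h
      rw [hNdiv q hqS] at hnat
      obtain ⟨r, hr, hqr⟩ := (hq.prime.dvd_finset_prod_iff id).mp hnat
      have : q = r := ((Nat.prime_dvd_prime_iff_eq hq (hSprime r (Finset.mem_of_mem_erase hr))).mp hqr)
      exact (Finset.ne_of_mem_erase hr) this.symm
  · have h1 : P.count q = 0 := Multiset.count_eq_zero.mpr fun h => hqS (hPmem q h)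
    have h2 : P'.count q = 0 := Multiset.count_eq_zero.mpr fun h => hqS (hP'mem q h)
    simp [h1, h2]

lemma count_dvd_of_congr {P P' : Multiset ℕ} (hP : ∀ p ∈ P, p.Prime) (hP' : ∀ p ∈ P', p.Prime)
    (hsum : (P.map pinv).sum = (P'.map pinv).sum) {q : ℕ} (hq : q.Prime)
    (hd : q ∣ P'.count q) : q ∣ P.count q := by
  have h := key_congr P P' hP hP' hsum q hq
  have : (q:ℤ) ∣ (P.count q : ℤ) := by
    have h2 : (q:ℤ) ∣ (P'.count q : ℤ) := Int.natCast_dvd_natCast.mpr hd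
    have h3 : (P.count q : ℤ) = ((P.count q : ℤ) - P'.count q) + P'.count q := by ring
    rw [h3]
    exact dvd_add h h2
  exact_mod_cast this

/-- a submultiset of the form `replicate c q` bounded below the sum -/
lemma sum_ge_of_count {P : Multiset ℕ} (hP : ∀ p ∈ P, p.Prime) {q : ℕ} (hq : q ∈ P)
    (hd : q ∣ P.count q) : (1:ℚ) ≤ (P.map pinv).sum := by
  have hqp := hP q hq
  have hc1 : 1 ≤ P.count q := Multiset.one_le_count_iff_mem.mpr hq
  have hcq : q ≤ P.count q := Nat.le_of_dvd hc1 hd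
  have hrep : Multiset.replicate (P.count q) q ≤ P := Multiset.le_count_iff_replicate_le.mp le_rfl
  have hle : ((Multiset.replicate (P.count q) q).map pinv).sum ≤ (P.map pinv).sum := by
    apply msum_le (Multiset.map_le_map hrep)
    intro a ha
    obtain ⟨p, hp, rfl⟩ := Multiset.mem_map.mp ha
    exact (pinv_pos (hP p hp).pos).le
  have hsum : ((Multiset.replicate (P.count q) q).map pinv).sum = (P.count q : ℚ) * pinv q := by
    rw [Multiset.map_replicate, Multiset.sum_replicate, nsmul_eq_mul]
  have hq0 : (q:ℚ) ≠ 0 := Nat.cast_ne_zero.mpr hqp.pos.ne'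
  have hfin : (1:ℚ) ≤ (P.count q : ℚ) * pinv q := by
    rw [pinv_def]
    have hq' : (0:ℚ) < (q:ℚ) := by exact_mod_cast hqp.pos
    calc (1:ℚ) = q * (1/q) := by field_simp
      _ ≤ (P.count q : ℚ) * (1/q) := by
          apply mul_le_mul_of_nonneg_right _ (by positivity)
          exact_mod_cast hcq
  linarith [hsum ▸ hle]

lemma fact1 {P : Multiset ℕ} (hP : ∀ p ∈ P, p.Prime) {p₀ : ℕ} (hp₀ : p₀.Prime)
    (hsum : (P.map pinv).sum = pinv p₀) : P = {p₀} := by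
  have hsum' : (P.map pinv).sum = (({p₀} : Multiset ℕ).map pinv).sum := by
    rw [Multiset.map_singleton, Multiset.sum_singleton, hsum]
  have hP' : ∀ p ∈ ({p₀} : Multiset ℕ), p.Prime := by
    intro p hp; rw [Multiset.mem_singleton] at hp; exact hp ▸ hp₀
  have hlt : pinv p₀ < 1 := by
    rw [pinv_def]
    rw [div_lt_one (by exact_mod_cast hp₀.pos)]
    exact_mod_cast hp₀.one_lt
  have hall : ∀ q ∈ P, q = p₀ := by
    intro q hq
    by_contra hne
    have hd0 : q ∣ Multiset.count q ({p₀} : Multiset ℕ) := by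
      rw [Multiset.count_singleton]
      simp [hne]
    have hd : q ∣ P.count q := count_dvd_of_congr hP hP' hsum' (hP q hq) hd0
    have := sum_ge_of_count hP hq hd
    linarith [hsum ▸ this]
  have hrep : P = Multiset.replicate (Multiset.card P) p₀ := Multiset.eq_replicate_card.mpr hall
  have hcard : (Multiset.card P : ℚ) * pinv p₀ = pinv p₀ := by
    have : (P.map pinv).sum = (Multiset.card P : ℚ) * pinv p₀ := by
      rw [hrep]; rw [Multiset.map_replicate, Multiset.sum_replicate, nsmul_eq_mul]
      simp
    rw [← this, hsum]
  have hp0pos : 0 < pinv p₀ := pinv_pos hp₀.pos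
  have hc1 : (Multiset.card P : ℚ) = 1 :=
    mul_right_cancel₀ hp0pos.ne' (hcard.trans (one_mul (pinv p₀)).symm)
  have hcard1 : Multiset.card P = 1 := by exact_mod_cast hc1
  rw [hrep, hcard1, Multiset.replicate_one]

lemma sum_ge_two {P : Multiset ℕ} (hP : ∀ p ∈ P, p.Prime) {q q' : ℕ} (hq : q ∈ P) (hq' : q' ∈ P)
    (hne : q ≠ q') (hd : q ∣ P.count q) (hd' : q' ∣ P.count q') : (2:ℚ) ≤ (P.map pinv).sum := by
  set c := P.count q
  set c' := P.count q'
  have hqp := hP q hq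
  have hq'p := hP q' hq'
  have hcq : q ≤ c := Nat.le_of_dvd (Multiset.one_le_count_iff_mem.mpr hq) hd
  have hcq' : q' ≤ c' := Nat.le_of_dvd (Multiset.one_le_count_iff_mem.mpr hq') hd'
  have hrep : Multiset.replicate c q + Multiset.replicate c' q' ≤ P := by
    rw [Multiset.le_iff_count]
    intro a
    rw [Multiset.count_add, Multiset.count_replicate, Multiset.count_replicate]
    rcases eq_or_ne a q with rfl | h1
    · rw [if_pos rfl, if_neg (Ne.symm hne), add_zero]
    · rw [if_neg (fun h => h1 h.symm)]
      rcases eq_or_ne a q' with rfl | h2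
      · rw [if_pos rfl, zero_add]
      · rw [if_neg (fun h => h2 h.symm)]
        exact Nat.zero_le _
  have hle : (((Multiset.replicate c q + Multiset.replicate c' q').map pinv)).sum ≤ (P.map pinv).sum := by
    apply msum_le (Multiset.map_le_map hrep)
    intro a ha
    obtain ⟨p, hp, rfl⟩ := Multiset.mem_map.mp ha
    exact (pinv_pos (hP p hp).pos).le
  have hseq : (((Multiset.replicate c q + Multiset.replicate c' q').map pinv)).sum
      = (c:ℚ) * pinv q + (c':ℚ) * pinv q' := by
    rw [Multiset.map_add, Multiset.sum_add, Multiset.map_replicate, Multiset.map_replicate,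
      Multiset.sum_replicate, Multiset.sum_replicate, nsmul_eq_mul, nsmul_eq_mul]
  have h1 : (1:ℚ) ≤ (c:ℚ) * pinv q := by
    rw [pinv_def]
    have : (0:ℚ) < q := by exact_mod_cast hqp.pos
    calc (1:ℚ) = q * (1/q) := by field_simp
      _ ≤ (c:ℚ) * (1/q) := mul_le_mul_of_nonneg_right (by exact_mod_cast hcq) (by positivity)
  have h2 : (1:ℚ) ≤ (c':ℚ) * pinv q' := by
    rw [pinv_def]
    have : (0:ℚ) < q' := by exact_mod_cast hq'p.pos
    calc (1:ℚ) = q' * (1/q') := by field_simp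
      _ ≤ (c':ℚ) * (1/q') := mul_le_mul_of_nonneg_right (by exact_mod_cast hcq') (by positivity)
  linarith [hseq ▸ hle]

lemma fact2 {P : Multiset ℕ} (hP : ∀ p ∈ P, p.Prime)
    (hsum : (P.map pinv).sum = 1) : ∃ p : ℕ, p.Prime ∧ P = Multiset.replicate p p := by
  have hR : ∀ p ∈ Multiset.replicate 2 2, Nat.Prime p := by
    intro p hp; rw [Multiset.eq_of_mem_replicate hp]; exact Nat.prime_two
  have hRsum : ((Multiset.replicate 2 2 : Multiset ℕ).map pinv).sum = 1 := by
    rw [Multiset.map_replicate, Multiset.sum_replicate, nsmul_eq_mul]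
    rw [pinv_def]; norm_num
  have hsum' : (P.map pinv).sum = ((Multiset.replicate 2 2 : Multiset ℕ).map pinv).sum := by
    rw [hsum, hRsum]
  have hdall : ∀ q ∈ P, q ∣ P.count q := by
    intro q hq
    apply count_dvd_of_congr hP hR hsum' (hP q hq)
    rw [Multiset.count_replicate]
    split_ifs with h
    · exact ⟨1, by omega⟩
    · exact dvd_zero q
  have hne : P ≠ 0 := by
    intro h; rw [h] at hsum; simp at hsum
  obtain ⟨p, hpP⟩ := Multiset.exists_mem_of_ne_zero hne
  have hall : ∀ q ∈ P, q = p := by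
    intro q hq
    by_contra hqp
    have := sum_ge_two hP hq hpP hqp (hdall q hq) (hdall p hpP)
    linarith [hsum ▸ this]
  have hrep : P = Multiset.replicate (Multiset.card P) p := Multiset.eq_replicate_card.mpr hall
  have hpp := hP p hpP
  have hkey : (Multiset.card P : ℚ) * pinv p = 1 := by
    have : (P.map pinv).sum = (Multiset.card P : ℚ) * pinv p := by
      rw [hrep, Multiset.map_replicate, Multiset.sum_replicate, nsmul_eq_mul]
      simp
    rw [← this, hsum]
  have hcard : Multiset.card P = p := by
    have hp0 : (p:ℚ) ≠ 0 := Nat.cast_ne_zero.mpr hpp.pos.ne'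
    rw [pinv_def] at hkey
    field_simp at hkey
    exact_mod_cast hkey
  exact ⟨p, hpp, hcard ▸ hrep⟩

/-- `a` is an (additive) atom of the submonoid `S`. -/
def IsAddAtomIn {R : Type*} [AddCommMonoid R] (S : AddSubmonoid R) (a : R) : Prop :=
  a ∈ S ∧ a ≠ 0 ∧ ∀ u v, u ∈ S → v ∈ S → u ≠ 0 → v ≠ 0 → a ≠ u + v

/-- Factorizations of `x` into atoms of `S`: multisets of atoms summing to `x`. -/
def Factorizations {R : Type*} [AddCommMonoid R] (S : AddSubmonoid R) (x : R) : Type _ :=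
  {l : Multiset R // (∀ a ∈ l, IsAddAtomIn S a) ∧ l.sum = x}

/-- The Betti graph of `x`: vertices are the factorizations of `x`, with an edge between
two distinct factorizations precisely when they share a common atom. -/
def bettiGraph {R : Type*} [AddCommMonoid R] (S : AddSubmonoid R) (x : R) :
    SimpleGraph (Factorizations S x) where
  Adj z z' := z ≠ z' ∧ ∃ a, a ∈ z.1 ∧ a ∈ z'.1
  symm := ⟨fun z z' h => ⟨h.1.symm, h.2.imp fun a ha => ⟨ha.2, ha.1⟩⟩⟩
  loopless := ⟨fun z h => h.1 rfl⟩

/-- `x` is a Betti element of `S`: `x ∈ S` and its Betti graph is disconnected. -/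
def IsBetti {R : Type*} [AddCommMonoid R] (S : AddSubmonoid R) (x : R) : Prop :=
  x ∈ S ∧ ¬ (bettiGraph S x).Connected


lemma atom_iff {a : ℚ} : IsAddAtomIn (AddSubmonoid.closure Gset) a ↔ a ∈ Gset := by
  constructor
  · rintro ⟨haM, ha0, hsplit⟩
    obtain ⟨P, hP, hsum⟩ := mem_M_iff.mp haM
    have hPne : P ≠ 0 := by
      intro h; rw [h] at hsum; simp at hsum; exact ha0 hsum.symm
    obtain ⟨p, hpP⟩ := Multiset.exists_mem_of_ne_zero hPne
    obtain ⟨t, rfl⟩ := Multiset.exists_cons_of_mem hpP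
    rcases eq_or_ne t 0 with rfl | ht0
    · refine ⟨p, hP p (Multiset.mem_cons_self p 0), ?_⟩
      rw [← hsum]; simp [pinv_def]
    · exfalso
      have hu : pinv p ∈ AddSubmonoid.closure Gset :=
        AddSubmonoid.subset_closure ⟨p, hP p (Multiset.mem_cons_self p t), rfl⟩
      have htP : ∀ q ∈ t, q.Prime := fun q hq => hP q (Multiset.mem_cons_of_mem hq)
      have hv : (t.map pinv).sum ∈ AddSubmonoid.closure Gset := mem_M_iff.mpr ⟨t, htP, rfl⟩
      have hvpos : 0 < (t.map pinv).sum := by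
        apply msum_pos
        · intro b hb
          obtain ⟨q, hq, rfl⟩ := Multiset.mem_map.mp hb
          exact pinv_pos (htP q hq).pos
        · simpa using ht0
      have hupos : 0 < pinv p := pinv_pos (hP p (Multiset.mem_cons_self p t)).pos
      apply hsplit (pinv p) ((t.map pinv).sum) hu hv hupos.ne' hvpos.ne'
      rw [← hsum, Multiset.map_cons, Multiset.sum_cons]
  · rintro ⟨p, hp, rfl⟩
    refine ⟨AddSubmonoid.subset_closure ⟨p, hp, rfl⟩, (pinv_pos hp.pos).ne', ?_⟩
    rintro u v hu hv hu0 hv0 heq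
    obtain ⟨Pu, hPu, hsu⟩ := mem_M_iff.mp hu
    obtain ⟨Pv, hPv, hsv⟩ := mem_M_iff.mp hv
    have hPune : Pu ≠ 0 := by rintro rfl; simp at hsu; exact hu0 hsu.symm
    have hPvne : Pv ≠ 0 := by rintro rfl; simp at hsv; exact hv0 hsv.symm
    have hsum : ((Pu + Pv).map pinv).sum = pinv p := by
      rw [Multiset.map_add, Multiset.sum_add, hsu, hsv, ← heq]; rfl
    have h1 : Pu + Pv = {p} := fact1 (by
      intro q hq
      rcases Multiset.mem_add.mp hq with h | h
      · exact hPu q h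
      · exact hPv q h) hp hsum
    have : Multiset.card (Pu + Pv) = 1 := by rw [h1]; rfl
    rw [Multiset.card_add] at this
    have h2 : 0 < Multiset.card Pu := Multiset.card_pos.mpr hPune
    have h3 : 0 < Multiset.card Pv := Multiset.card_pos.mpr hPvne
    omega

lemma fact_rep {x : ℚ} (z : Factorizations (AddSubmonoid.closure Gset) x) :
    ∃ P : Multiset ℕ, (∀ p ∈ P, p.Prime) ∧ P.map pinv = z.1 ∧ (P.map pinv).sum = x := by
  obtain ⟨P, hP, hmap⟩ := exists_rep z.1 (fun a ha => atom_iff.mp (z.2.1 a ha))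
  exact ⟨P, hP, hmap, by rw [hmap, z.2.2]⟩

lemma reach_of_share {R : Type*} [AddCommMonoid R] {S : AddSubmonoid R} {x : R}
    {z z' : Factorizations S x} (h : ∃ a, a ∈ z.1 ∧ a ∈ z'.1) :
    (bettiGraph S x).Reachable z z' := by
  by_cases he : z = z'
  · exact he ▸ SimpleGraph.Reachable.refl z
  · exact SimpleGraph.Adj.reachable (G := bettiGraph S x) (show z ≠ z' ∧ ∃ a, a ∈ z.1 ∧ a ∈ z'.1 from ⟨he, h⟩)

lemma eq_of_reach_no_edges {V : Type*} {G : SimpleGraph V} (hG : ∀ a b, ¬ G.Adj a b)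
    {z z' : V} (h : G.Reachable z z') : z = z' := by
  obtain ⟨w⟩ := h
  cases w with
  | nil => rfl
  | cons h' _ => exact absurd h' (hG _ _)

lemma replicate_fact {p : ℕ} (hp : p.Prime) :
    (∀ a ∈ Multiset.replicate p (pinv p), IsAddAtomIn (AddSubmonoid.closure Gset) a) ∧
      (Multiset.replicate p (pinv p)).sum = 1 := by
  constructor
  · intro a ha; rw [Multiset.eq_of_mem_replicate ha]; exact atom_iff.mpr ⟨p, hp, rfl⟩
  · rw [Multiset.sum_replicate, nsmul_eq_mul, pinv_def]
    have : (p:ℚ) ≠ 0 := Nat.cast_ne_zero.mpr hp.pos.ne'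
    field_simp

lemma one_disconnected : ¬ (bettiGraph (AddSubmonoid.closure Gset) 1).Connected := by
  have hstruct : ∀ z : Factorizations (AddSubmonoid.closure Gset) 1,
      ∃ p : ℕ, p.Prime ∧ z.1 = Multiset.replicate p (pinv p) := by
    intro z
    obtain ⟨P, hP, hmap, hsum⟩ := fact_rep z
    obtain ⟨p, hp, hPrep⟩ := fact2 hP hsum
    exact ⟨p, hp, by rw [← hmap, hPrep, Multiset.map_replicate]⟩
  have hnoadj : ∀ a b, ¬ (bettiGraph (AddSubmonoid.closure Gset) 1).Adj a b := by
    rintro a b (⟨hne, c, hca, hcb⟩ : a ≠ b ∧ ∃ c, c ∈ a.1 ∧ c ∈ b.1)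
    obtain ⟨p, hp, hap⟩ := hstruct a
    obtain ⟨p', hp', hbp⟩ := hstruct b
    rw [hap] at hca
    rw [hbp] at hcb
    have h1 := Multiset.eq_of_mem_replicate hca
    have h2 := Multiset.eq_of_mem_replicate hcb
    have hpp' : p = p' := pinv_inj hp.pos hp'.pos (h1 ▸ h2 ▸ rfl)
    apply hne
    apply Subtype.ext
    rw [hap, hbp, hpp']
  intro hc
  let z2 : Factorizations (AddSubmonoid.closure Gset) 1 := ⟨_, replicate_fact Nat.prime_two⟩
  let z3 : Factorizations (AddSubmonoid.closure Gset) 1 := ⟨_, replicate_fact Nat.prime_three⟩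
  have heq := eq_of_reach_no_edges hnoadj (hc.preconnected z2 z3)
  have hcard := congrArg (fun z : Factorizations (AddSubmonoid.closure Gset) 1 =>
    Multiset.card z.1) heq
  simp only [z2, z3, Multiset.card_replicate] at hcard
  exact (by norm_num : (2:ℕ) ≠ 3) hcard

lemma connected_zero : (bettiGraph (AddSubmonoid.closure Gset) 0).Connected := by
  have hz : ∀ z : Factorizations (AddSubmonoid.closure Gset) (0:ℚ), z.1 = 0 := by
    intro z
    by_contra h
    have hpos : 0 < z.1.sum := msum_pos (fun a ha => by
      obtain ⟨haM, ha0, -⟩ := z.2.1 a ha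
      exact lt_of_le_of_ne (M_nonneg haM) (Ne.symm ha0)) h
    rw [z.2.2] at hpos
    exact lt_irrefl 0 hpos
  haveI : Nonempty (Factorizations (AddSubmonoid.closure Gset) (0:ℚ)) :=
    ⟨⟨0, fun a ha => absurd ha (Multiset.notMem_zero a), rfl⟩⟩
  exact ⟨fun z z' => by rw [show z = z' from Subtype.ext ((hz z).trans (hz z').symm)]⟩

lemma connected_of_ne {x : ℚ} (hx : x ∈ AddSubmonoid.closure Gset) (hx0 : x ≠ 0) (hx1 : x ≠ 1) :
    (bettiGraph (AddSubmonoid.closure Gset) x).Connected := by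
  obtain ⟨P₀, hP₀, hs₀⟩ := mem_M_iff.mp hx
  haveI : Nonempty (Factorizations (AddSubmonoid.closure Gset) x) :=
    ⟨⟨P₀.map pinv, fun a ha => by
      obtain ⟨p, hp, rfl⟩ := Multiset.mem_map.mp ha
      exact atom_iff.mpr ⟨p, hP₀ p hp, rfl⟩, hs₀⟩⟩
  by_cases hcase : ∃ q : ℕ, q.Prime ∧ ¬ (q ∣ P₀.count q)
  · obtain ⟨q, hq, hnd⟩ := hcase
    have hkey : ∀ z : Factorizations (AddSubmonoid.closure Gset) x, pinv q ∈ z.1 := by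
      intro z
      obtain ⟨P, hP, hmap, hsum⟩ := fact_rep z
      have hnd' : ¬ (q ∣ P.count q) := fun hdd =>
        hnd (count_dvd_of_congr hP₀ hP (by rw [hs₀, hsum]) hq hdd)
      have hqP : q ∈ P := by
        by_contra h
        exact hnd' (by rw [Multiset.count_eq_zero.mpr h]; exact dvd_zero q)
      rw [← hmap]
      exact Multiset.mem_map_of_mem pinv hqP
    exact ⟨fun z z' => reach_of_share ⟨pinv q, hkey z, hkey z'⟩⟩
  · push_neg at hcase
    set n : ℕ := ∑ p ∈ P₀.toFinset, P₀.count p / p with hn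
    have hxn : (n : ℚ) = x := by
      rw [← hs₀, Finset.sum_multiset_map_count, hn, Nat.cast_sum]
      apply Finset.sum_congr rfl
      intro p hp
      have hpp := hP₀ p (Multiset.mem_toFinset.mp hp)
      have hdvd := hcase p hpp
      have hp0 : (p:ℚ) ≠ 0 := Nat.cast_ne_zero.mpr hpp.pos.ne'
      rw [Nat.cast_div hdvd hp0, nsmul_eq_mul, pinv_def]
      ring
    have hn0 : n ≠ 0 := by intro h; exact hx0 (by rw [← hxn, h]; simp)
    have hn1 : n ≠ 1 := by rintro h; exact hx1 (by rw [← hxn, h]; simp)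
    constructor
    intro z z'
    obtain ⟨P, hP, hmap, hsum⟩ := fact_rep z
    obtain ⟨P', hP', hmap', hsum'⟩ := fact_rep z'
    have hPne : P ≠ 0 := by rintro rfl; exact hx0 (by rw [← hsum]; simp)
    have hP'ne : P' ≠ 0 := by rintro rfl; exact hx0 (by rw [← hsum']; simp)
    obtain ⟨p, hpP⟩ := Multiset.exists_mem_of_ne_zero hPne
    obtain ⟨p', hp'P⟩ := Multiset.exists_mem_of_ne_zero hP'ne
    have hppr := hP p hpP
    have hp'pr := hP' p' hp'P
    have hp0 : (p:ℚ) ≠ 0 := Nat.cast_ne_zero.mpr hppr.pos.ne'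
    have hp'0 : (p':ℚ) ≠ 0 := Nat.cast_ne_zero.mpr hp'pr.pos.ne'
    set Q : Multiset ℚ :=
      Multiset.replicate p (pinv p) + Multiset.replicate ((n-1)*p') (pinv p') with hQ
    have hQatoms : ∀ a ∈ Q, IsAddAtomIn (AddSubmonoid.closure Gset) a := by
      intro a ha
      rcases Multiset.mem_add.mp ha with h | h
      · rw [Multiset.eq_of_mem_replicate h]; exact atom_iff.mpr ⟨p, hppr, rfl⟩
      · rw [Multiset.eq_of_mem_replicate h]; exact atom_iff.mpr ⟨p', hp'pr, rfl⟩
    have hQsum : Q.sum = x := by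
      rw [hQ, Multiset.sum_add, Multiset.sum_replicate, Multiset.sum_replicate,
        nsmul_eq_mul, nsmul_eq_mul, pinv_def, pinv_def, ← hxn]
      push_cast [Nat.cast_sub (by omega : 1 ≤ n)]
      field_simp
      ring
    let mid : Factorizations (AddSubmonoid.closure Gset) x := ⟨Q, hQatoms, hQsum⟩
    have h1 : (bettiGraph (AddSubmonoid.closure Gset) x).Reachable z mid := by
      apply reach_of_share
      refine ⟨pinv p, ?_, ?_⟩
      · rw [← hmap]; exact Multiset.mem_map_of_mem pinv hpP
      · exact Multiset.mem_add.mpr (Or.inl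
          (Multiset.mem_replicate.mpr ⟨hppr.pos.ne', rfl⟩))
    have h2 : (bettiGraph (AddSubmonoid.closure Gset) x).Reachable mid z' := by
      apply reach_of_share
      refine ⟨pinv p', ?_, ?_⟩
      · refine Multiset.mem_add.mpr (Or.inr (Multiset.mem_replicate.mpr ⟨?_, rfl⟩))
        have h2n : 2 ≤ n := by omega
        have hp'pos := hp'pr.pos
        exact Nat.mul_ne_zero (by omega) (by omega)
      · rw [← hmap']; exact Multiset.mem_map_of_mem pinv hp'P
    exact h1.trans h2

lemma one_mem_M : (1:ℚ) ∈ AddSubmonoid.closure Gset := by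
  apply mem_M_iff.mpr
  refine ⟨Multiset.replicate 2 2, ?_, ?_⟩
  · intro p hp; rw [Multiset.eq_of_mem_replicate hp]; exact Nat.prime_two
  · rw [Multiset.map_replicate, Multiset.sum_replicate, nsmul_eq_mul, pinv_def]
    norm_num

lemma not_fg : ¬ ∃ F : Finset ℚ, AddSubmonoid.closure Gset = AddSubmonoid.closure (F : Set ℚ) := by
  rintro ⟨F, hF⟩
  have hatomF : ∀ a : ℚ, IsAddAtomIn (AddSubmonoid.closure Gset) a → a ∈ (F : Set ℚ) := by
    rintro a ⟨haM, ha0, hsplit⟩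
    have haF : a ∈ AddSubmonoid.closure (F : Set ℚ) := hF ▸ haM
    obtain ⟨l, hl, hsum⟩ := AddSubmonoid.exists_multiset_of_mem_closure haF
    classical
    set l' : Multiset ℚ := l.filter (fun b => b ≠ 0) with hl'
    have hzero : (l.filter (fun b => ¬ b ≠ 0)).sum = 0 := by
      have : l.filter (fun b => ¬ b ≠ 0) =
          Multiset.replicate (Multiset.card (l.filter (fun b => ¬ b ≠ 0))) 0 := by
        apply Multiset.eq_replicate_card.mpr
        intro b hb
        have := Multiset.of_mem_filter hb
        simpa using this
      rw [this, Multiset.sum_replicate, smul_zero]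
    have hsum' : l'.sum = a := by
      have hsplit2 := Multiset.filter_add_not (fun b => b ≠ 0) l
      have : l'.sum + (l.filter (fun b => ¬ b ≠ 0)).sum = l.sum := by
        rw [← Multiset.sum_add, hsplit2]
      rw [hzero, add_zero] at this
      rw [this, hsum]
    have hl'F : ∀ b ∈ l', b ∈ (F : Set ℚ) := fun b hb => hl b (Multiset.mem_of_mem_filter hb)
    have hl'0 : ∀ b ∈ l', b ≠ 0 := fun b hb => by simpa using Multiset.of_mem_filter hb
    have hl'M : ∀ b ∈ l', b ∈ AddSubmonoid.closure Gset := fun b hb =>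
      hF ▸ AddSubmonoid.subset_closure (hl'F b hb)
    have hl'ne : l' ≠ 0 := by
      intro h
      rw [h] at hsum'
      simp at hsum'
      exact ha0 hsum'.symm
    obtain ⟨b, hbl'⟩ := Multiset.exists_mem_of_ne_zero hl'ne
    obtain ⟨t, htl'⟩ := Multiset.exists_cons_of_mem hbl'
    rcases eq_or_ne t 0 with rfl | ht0
    · have : a = b := by rw [← hsum', htl']; simp
      exact this ▸ hl'F b hbl'
    · exfalso
      have htmem : ∀ c ∈ t, c ∈ l' := fun c hc => htl' ▸ Multiset.mem_cons_of_mem hc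
      have htM : t.sum ∈ AddSubmonoid.closure Gset :=
        AddSubmonoid.multiset_sum_mem _ _ (fun c hc => hl'M c (htmem c hc))
      have htpos : 0 < t.sum := msum_pos (fun c hc =>
        lt_of_le_of_ne (M_nonneg (hl'M c (htmem c hc))) (Ne.symm (hl'0 c (htmem c hc)))) ht0
      apply hsplit b t.sum (hl'M b hbl') htM (hl'0 b hbl') htpos.ne'
      rw [← hsum', htl', Multiset.sum_cons]
  have hsub : Gset ⊆ (F : Set ℚ) := by
    rintro a ha
    exact hatomF a (atom_iff.mpr ha)
  have hGinf : Gset.Infinite := by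
    have himg : Gset = pinv '' {p : ℕ | p.Prime} := by
      ext a
      constructor
      · rintro ⟨p, hp, rfl⟩; exact ⟨p, hp, rfl⟩
      · rintro ⟨p, hp, rfl⟩; exact ⟨p, hp, rfl⟩
    rw [himg]
    apply Set.Infinite.image _ Nat.infinite_setOf_prime
    intro p hp q hq h
    exact pinv_inj (Nat.Prime.pos hp) (Nat.Prime.pos hq) h
  exact Set.not_infinite.mpr F.finite_toSet (hGinf.mono hsub)

/-- Let `M = ⟨1/p : p prime⟩ ⊆ ℚ≥0`. Then `M` is atomic with atoms `{1/p : p prime}`,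
`1` is the unique Betti element of `M`; in particular `M` has finitely many Betti elements
but is not finitely generated. -/
theorem stmt_15 (M : AddSubmonoid ℚ)
    (hM : M = AddSubmonoid.closure {x : ℚ | ∃ p : ℕ, p.Prime ∧ x = 1 / p}) :
    (∀ x ∈ M, x ≠ 0 → ∃ l : Multiset ℚ, (∀ a ∈ l, IsAddAtomIn M a) ∧ l.sum = x) ∧
    (∀ a, IsAddAtomIn M a ↔ ∃ p : ℕ, p.Prime ∧ a = 1 / p) ∧
    (∀ x, IsBetti M x ↔ x = 1) ∧
    {x | IsBetti M x}.Finite ∧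
    ¬ ∃ F : Finset ℚ, M = AddSubmonoid.closure (F : Set ℚ) := by
  have hM' : M = AddSubmonoid.closure Gset := hM
  subst hM'
  refine ⟨?_, ?_, ?_, ?_, ?_⟩
  · intro x hx _
    obtain ⟨P, hP, hsum⟩ := mem_M_iff.mp hx
    refine ⟨P.map pinv, ?_, hsum⟩
    intro a ha
    obtain ⟨p, hp, rfl⟩ := Multiset.mem_map.mp ha
    exact atom_iff.mpr ⟨p, hP p hp, rfl⟩
  · intro a
    exact atom_iff
  · intro x
    constructor
    · rintro ⟨hxM, hnc⟩
      by_contra hx1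
      rcases eq_or_ne x 0 with rfl | hx0
      · exact hnc connected_zero
      · exact hnc (connected_of_ne hxM hx0 hx1)
    · rintro rfl
      exact ⟨one_mem_M, one_disconnected⟩
  · have hset : {x : ℚ | IsBetti (AddSubmonoid.closure Gset) x} = {1} := by
      ext x
      simp only [Set.mem_setOf_eq, Set.mem_singleton_iff]
      constructor
      · rintro ⟨hxM, hnc⟩
        by_contra hx1
        rcases eq_or_ne x 0 with rfl | hx0
        · exact hnc connected_zero
        · exact hnc (connected_of_ne hxM hx0 hx1)
      · rintro rfl
        exact ⟨one_mem_M, one_disconnected⟩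
    rw [hset]
    exact Set.finite_singleton 1
  · exact not_fg
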